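/- Let H be a real inner product space and q̂, Q ∈ H with q̂ ≠ Q. Define a = ‖q̂ − Q‖², b = 2(q̂ − Q, Q), c₀ a real number, and suppose b ≤ 0, c₀ > 0, b² − 4ac₀ ≥ 0. Let ξ = (−b − √(b² − 4ac₀))/(2a) and set q = ξ·q̂ + (1 − ξ)·Q. Then ‖q‖² = ‖Q‖² − c₀. -/

import Mathlib

open InnerProductSpace

theorem relaxed_update_norm_sq
    {H : Type*} [NormedAddCommGroup H] [InnerProductSpace ℝ H]
    (qhat Q : H) (hne : qhat ≠ Q)
    (a b c₀ : ℝ)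
    (ha : a = ‖qhat - Q‖ ^ 2)
    (hb : b = 2 * ⟪qhat - Q, Q⟫_ℝ)
    (hbn : b ≤ 0) (hc : 0 < c₀)
    (hdisc : 0 ≤ b ^ 2 - 4 * a * c₀)
    (ξ : ℝ) (hξ : ξ = (-b - Real.sqrt (b ^ 2 - 4 * a * c₀)) / (2 * a))
    (q : H) (hq : q = ξ • qhat + (1 - ξ) • Q) :
    ‖q‖ ^ 2 = ‖Q‖ ^ 2 - c₀ := by
  have hane : qhat - Q ≠ 0 := sub_ne_zero.mpr hne
  have ha0 : 0 < a := by
    have h0 : 0 < ‖qhat - Q‖ := norm_pos_iff.mpr hane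
    rw [ha]; positivity
  have hs : Real.sqrt (b ^ 2 - 4 * a * c₀) ^ 2 = b ^ 2 - 4 * a * c₀ :=
    Real.sq_sqrt hdisc
  have hroot : a * ξ ^ 2 + b * ξ + c₀ = 0 := by
    rw [hξ]
    field_simp
    have hs' : Real.sqrt (b ^ 2 - a * 4 * c₀) ^ 2 = b ^ 2 - a * 4 * c₀ := by
      rw [show a * 4 = 4 * a by ring]; exact hs
    nlinarith [hs']
  have hq' : q = ξ • (qhat - Q) + Q := by
    rw [hq, smul_sub, sub_smul, one_smul]; abel
  have hexp : ‖q‖ ^ 2 = ‖ξ • (qhat - Q)‖ ^ 2 + 2 * ⟪ξ • (qhat - Q), Q⟫_ℝ + ‖Q‖ ^ 2 := by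
    rw [hq', norm_add_sq_real]
  rw [hexp, norm_smul, real_inner_smul_left, mul_pow]
  have : |ξ| ^ 2 = ξ ^ 2 := sq_abs ξ
  rw [Real.norm_eq_abs, this]
  subst ha hb
  linear_combination hroot
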